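/- Let R be a ring. If every right R-module is regularly weakly based, then R is right perfect; that is, for each sequence (r_n | n ∈ ℕ) of elements of R there is n₀ ∈ ℕ such that for all n ≥ n₀ there is j ≥ 1 with r_{n+j} ⋯ r_{n+1} R = r_{n+j} ⋯ r_{n+1} r_n R. -/

import Mathlib

/-- A weak basis of a module: a weakly independent generating set. -/
def IsWeakBasis (R : Type*) [Semiring R] {M : Type*} [AddCommMonoid M]
    [Module R M] (X : Set M) : Prop :=
  (∀ x ∈ X, x ∉ Submodule.span R (X \ {x})) ∧ Submodule.span R X = ⊤

/-- A module is regularly weakly based if every generating set contains a weak basis. -/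
def RegularlyWeaklyBased (R : Type*) [Semiring R] (M : Type*) [AddCommMonoid M]
    [Module R M] : Prop :=
  ∀ X : Set M, Submodule.span R X = ⊤ → ∃ W ⊆ X, IsWeakBasis R W

/-- `seqProd r n j = r (n + j) * ⋯ * r (n + 1)` (and `1` for `j = 0`). -/
def seqProd {R : Type*} [Ring R] (r : ℕ → R) (n : ℕ) : ℕ → R
  | 0 => 1
  | j + 1 => r (n + j + 1) * seqProd r n j

namespace RWBAux

open MulOpposite Finsupp Submodule

variable {R : Type*} [Ring R]

/-- `prodFrom r n j = r (n+j-1) * ⋯ * r n` (and `1` for `j = 0`). -/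
def prodFrom (r : ℕ → R) (n : ℕ) : ℕ → R
  | 0 => 1
  | j + 1 => r (n + j) * prodFrom r n j

lemma seqProd_eq_prodFrom (r : ℕ → R) (n j : ℕ) : seqProd r n j = prodFrom r (n + 1) j := by
  induction j with
  | zero => rfl
  | succ j ih =>
      show r (n + j + 1) * seqProd r n j = r (n + 1 + j) * prodFrom r (n + 1) j
      rw [ih, show n + j + 1 = n + 1 + j by omega]

/-- The generators of the Bass relation submodule. -/
noncomputable def gen (r : ℕ → R) (n : ℕ) : ℕ →₀ R :=
  Finsupp.single n 1 - op (r n) • Finsupp.single (n + 1) 1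

/-- The Bass relation submodule. -/
noncomputable def G (r : ℕ → R) : Submodule Rᵐᵒᵖ (ℕ →₀ R) :=
  span Rᵐᵒᵖ (Set.range (gen r))

/-- The canonical generators of the Bass module. -/
noncomputable def x (r : ℕ → R) (n : ℕ) : (ℕ →₀ R) ⧸ G r :=
  (G r).mkQ (Finsupp.single n 1)

lemma x_rel (r : ℕ → R) (n : ℕ) : x r n = op (r n) • x r (n + 1) := by
  have h0 : (G r).mkQ (gen r n) = 0 := by
    rw [Submodule.mkQ_apply, Submodule.Quotient.mk_eq_zero]
    exact subset_span (Set.mem_range_self n)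
  rw [gen, map_sub, map_smul, sub_eq_zero] at h0
  exact h0

lemma x_desc (r : ℕ → R) (n j : ℕ) : x r n = op (prodFrom r n j) • x r (n + j) := by
  induction j with
  | zero => simp [prodFrom]
  | succ j ih =>
      rw [ih, x_rel r (n + j)]
      rw [smul_smul, show n + (j+1) = n + j + 1 by omega]
      rfl

lemma span_range_x (r : ℕ → R) : span Rᵐᵒᵖ (Set.range (x r)) = ⊤ := by
  have h1 : span Rᵐᵒᵖ (Set.range fun n : ℕ => (Finsupp.single n 1 : ℕ →₀ R)) = ⊤ := by
    rw [eq_top_iff]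
    rintro f -
    induction f using Finsupp.induction with
    | zero => exact zero_mem _
    | single_add a b f _ _ ih =>
        refine add_mem ?_ ih
        have : (Finsupp.single a b : ℕ →₀ R) = op b • Finsupp.single a 1 := by
          rw [Finsupp.smul_single, op_smul_eq_mul, one_mul]
        rw [this]
        exact smul_mem _ _ (subset_span (Set.mem_range_self a))
  have : Set.range (x r) = (G r).mkQ '' Set.range fun n : ℕ => (Finsupp.single n 1 : ℕ →₀ R) := by
    rw [← Set.range_comp]; rfl
  rw [this, Submodule.span_image, h1, Submodule.map_top, Submodule.range_mkQ]

/-- Kernel computation: a single-coordinate element dies in the Bass module only if it is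
killed by a product of the `r`'s. -/
lemma ker_single (r : ℕ → R) (m : ℕ) (t : R) (hmem : Finsupp.single m t ∈ G r) :
    ∃ k, prodFrom r m k * t = 0 := by
  rw [G, Finsupp.mem_span_range_iff_exists_finsupp] at hmem
  obtain ⟨c, hc⟩ := hmem
  -- coefficient equations
  have hgen : ∀ (n i : ℕ) (a : Rᵐᵒᵖ), (a • gen r i) n
      = ((if i = n then (1:R) else 0) - if i + 1 = n then r i else 0) * unop a := by
    intro n i a
    have h1 : (op (r i) • Finsupp.single (i+1) 1 : ℕ →₀ R) = Finsupp.single (i+1) (r i) := by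
      rw [Finsupp.smul_single, op_smul_eq_mul, one_mul]
    rw [Finsupp.smul_apply, gen, Finsupp.sub_apply, h1, Finsupp.single_apply,
      Finsupp.single_apply]
    rfl
  have hcoef : ∀ n : ℕ,
      (c.sum fun i a => ((if i = n then (1:R) else 0) - if i + 1 = n then r i else 0) * unop a)
        = if m = n then t else 0 := by
    intro n
    have h2 := congrArg (fun f : ℕ →₀ R => f n) hc
    simp only [Finsupp.sum_apply, Finsupp.single_apply] at h2
    rw [← h2]
    exact Finsupp.sum_congr fun i _ => (hgen n i (c i)).symm
  have hsum1 : ∀ n : ℕ, (c.sum fun i a => (if i = n then (1:R) else 0) * unop a) = unop (c n) := by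
    intro n
    rw [Finsupp.sum,
      Finset.sum_congr rfl (fun i _ => show (if i = n then (1:R) else 0) * unop (c i)
        = if i = n then unop (c i) else 0 by by_cases h : i = n <;> simp [h]),
      Finset.sum_ite_eq' c.support n (fun i => unop (c i))]
    by_cases hn : n ∈ c.support
    · simp [hn]
    · simp [hn, Finsupp.notMem_support_iff.mp hn]
  have hsum20 : (c.sum fun i a => (if i + 1 = 0 then r i else 0) * unop a) = 0 := by
    rw [Finsupp.sum]
    exact Finset.sum_eq_zero fun i _ => by simp
  have hsum2 : ∀ n' : ℕ, (c.sum fun i a => (if i + 1 = n' + 1 then r i else 0) * unop a)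
      = r n' * unop (c n') := by
    intro n'
    rw [Finsupp.sum,
      Finset.sum_congr rfl (fun i _ => show (if i + 1 = n' + 1 then r i else 0) * unop (c i)
        = if i = n' then r i * unop (c i) else 0 by by_cases h : i = n' <;> simp [h]),
      Finset.sum_ite_eq' c.support n' (fun i => r i * unop (c i))]
    by_cases hn : n' ∈ c.support
    · simp [hn]
    · simp [hn, Finsupp.notMem_support_iff.mp hn]
  have keygen : ∀ n : ℕ,
      (c.sum fun i a => (if i = n then (1:R) else 0) * unop a)
        - (c.sum fun i a => (if i + 1 = n then r i else 0) * unop a)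
        = if m = n then t else 0 := by
    intro n
    rw [← Finsupp.sum_sub, ← hcoef n]
    exact Finsupp.sum_congr fun i _ => (sub_mul _ _ _).symm
  have key0 : unop (c 0) - 0 = if m = 0 then t else 0 := by
    have h7 := keygen 0
    rw [hsum1 0, hsum20] at h7
    exact h7
  have keyS : ∀ n' : ℕ, unop (c (n' + 1)) - r n' * unop (c n') = if m = n' + 1 then t else 0 := by
    intro n'
    have h7 := keygen (n' + 1)
    rw [hsum1 (n' + 1), hsum2 n'] at h7
    exact h7
  -- below m the coefficients vanish
  have below : ∀ n, n < m → unop (c n) = 0 := by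
    intro n
    induction n with
    | zero =>
        intro hlt
        have h3 := key0
        rw [if_neg (by omega), sub_zero] at h3
        exact h3
    | succ n ih =>
        intro hlt
        have h3 := keyS n
        rw [if_neg (by omega), ih (by omega), mul_zero, sub_zero] at h3
        exact h3
  -- from m on they are the products
  have above : ∀ j, unop (c (m + j)) = prodFrom r m j * t := by
    intro j
    induction j with
    | zero =>
        simp only [prodFrom, one_mul, Nat.add_zero]
        match m, below with
        | 0, below =>
            have h3 := key0
            rw [if_pos rfl, sub_zero] at h3
            exact h3
        | n' + 1, below =>
            have h3 := keyS n'
            rw [if_pos rfl, below n' (by omega), mul_zero, sub_zero] at h3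
            exact h3
    | succ j ih =>
        have h3 := keyS (m + j)
        rw [if_neg (by omega)] at h3
        have h2 : unop (c (m + j + 1)) = r (m + j) * unop (c (m + j)) :=
          sub_eq_zero.mp h3
        rw [show m + (j+1) = m + j + 1 by omega, h2, ih, prodFrom, ← mul_assoc]
  refine ⟨(c.support.sup id) + 1, ?_⟩
  have hout : c (m + ((c.support.sup id) + 1)) = 0 := by
    apply Finsupp.notMem_support_iff.mp
    intro hmem'
    have h4 := Finset.le_sup (f := id) hmem'
    simp only [id] at h4
    omega
  have h5 := above ((c.support.sup id) + 1)
  rw [hout] at h5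
  simpa using h5.symm

end RWBAux

/-- If every right `R`-module (i.e. every `Rᵐᵒᵖ`-module) is regularly weakly based,
then `R` is right perfect: for each sequence `(rₙ)` in `R` there is `n₀` such that for
all `n ≥ n₀` there is `j ≥ 1` with `r_{n+j} ⋯ r_{n+1} R = r_{n+j} ⋯ r_{n+1} rₙ R`. -/
theorem rightPerfect_of_forall_regularlyWeaklyBased.{u}
    (R : Type u) [Ring R]
    (h : ∀ (M : Type u) [AddCommGroup M] [Module Rᵐᵒᵖ M], RegularlyWeaklyBased Rᵐᵒᵖ M) :
    ∀ r : ℕ → R, ∃ n₀ : ℕ, ∀ n ≥ n₀, ∃ j, 1 ≤ j ∧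
      {x : R | ∃ s : R, x = seqProd r n j * s} =
        {x : R | ∃ s : R, x = seqProd r n j * r n * s} := by
  intro r
  open RWBAux MulOpposite Submodule in
  -- apply the hypothesis to the Bass module
  obtain ⟨W, hWsub, hWindep, hWspan⟩ :=
    h ((ℕ →₀ R) ⧸ G r) (Set.range (x r)) (span_range_x r)
  -- the weak basis is contained in a single generator `x r p`
  have hsingle : ∃ p : ℕ, span Rᵐᵒᵖ {x r p} = ⊤ := by
    rcases Set.eq_empty_or_nonempty W with hW | ⟨w, hw⟩
    · refine ⟨0, eq_top_iff.mpr ?_⟩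
      rw [hW, Submodule.span_empty] at hWspan
      rw [← hWspan]
      exact bot_le
    · obtain ⟨p₀, hp₀⟩ := hWsub hw
      set S : Set ℕ := {n | x r n ∈ W} with hS
      have hSne : S.Nonempty := ⟨p₀, show x r p₀ ∈ W by rw [hp₀]; exact hw⟩
      set p := sInf S with hp
      have hpS : p ∈ S := Nat.sInf_mem hSne
      have hpW : x r p ∈ W := hpS
      have hall : ∀ w' ∈ W, w' = x r p := by
        intro w' hw'
        obtain ⟨q, hq⟩ := hWsub hw'
        by_contra hne
        have hqW : x r q ∈ W := by rw [hq]; exact hw'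
        have hpq : p ≤ q := Nat.sInf_le hqW
        have hxne : x r q ≠ x r p := by rw [hq]; exact hne
        have hdesc := x_desc r p (q - p)
        rw [show p + (q - p) = q by omega] at hdesc
        have hmem2 : x r q ∈ span Rᵐᵒᵖ (W \ {x r p}) := subset_span ⟨hqW, hxne⟩
        have h6 := smul_mem (span Rᵐᵒᵖ (W \ {x r p})) (op (prodFrom r p (q - p))) hmem2
        rw [← hdesc] at h6
        exact hWindep (x r p) hpW h6
      refine ⟨p, eq_top_iff.mpr ?_⟩
      rw [← hWspan]
      apply span_le.mpr
      intro w' hw'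
      rw [hall w' hw']
      exact subset_span rfl
  obtain ⟨p, hspan⟩ := hsingle
  refine ⟨p, fun n hn => ?_⟩
  -- x r (n+1) lies in the span of x r p
  have hmem : x r (n + 1) ∈ span Rᵐᵒᵖ {x r p} := by rw [hspan]; exact Submodule.mem_top
  obtain ⟨a, ha⟩ := Submodule.mem_span_singleton.mp hmem
  -- derive the relation op (1 - u) • x r (n+1) = 0
  set u : R := prodFrom r p (n + 1 - p) * unop a with hu
  have hxu : x r (n + 1) = op u • x r (n + 1) := by
    have hdesc := x_desc r p (n + 1 - p)
    rw [show p + (n + 1 - p) = n + 1 by omega] at hdesc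
    calc x r (n + 1) = a • x r p := ha.symm
      _ = a • op (prodFrom r p (n + 1 - p)) • x r (n + 1) := by rw [← hdesc]
      _ = op u • x r (n + 1) := by
          rw [smul_smul, hu]
          rfl
  have hker : Finsupp.single (n + 1) (1 - u) ∈ G r := by
    have h0 : op (1 - u) • x r (n + 1) = 0 := by
      have hop : (op (1 - u) : Rᵐᵒᵖ) = 1 - op u := by
        rw [op_sub, op_one]
      rw [hop, sub_smul, one_smul, ← hxu, sub_self]
    have h1 : (Finsupp.single (n+1) (1 - u) : ℕ →₀ R)
        = op (1 - u) • Finsupp.single (n+1) 1 := by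
      rw [Finsupp.smul_single, op_smul_eq_mul, one_mul]
    have h2 : (G r).mkQ (Finsupp.single (n+1) (1 - u)) = 0 := by
      rw [h1, map_smul]
      exact h0
    rw [Submodule.mkQ_apply, Submodule.Quotient.mk_eq_zero] at h2
    exact h2
  obtain ⟨k, hk⟩ := ker_single r (n + 1) (1 - u) hker
  have hPk : prodFrom r (n + 1) k = prodFrom r (n + 1) k * u := by
    rw [mul_sub, mul_one] at hk
    exact (sub_eq_zero.mp hk)
  -- bump to k + 1 to ensure j ≥ 1
  have hPk1 : prodFrom r (n + 1) (k + 1) = prodFrom r (n + 1) (k + 1) * u := by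
    show r (n + 1 + k) * prodFrom r (n + 1) k = r (n + 1 + k) * prodFrom r (n + 1) k * u
    rw [mul_assoc, ← hPk]
  -- split off r n from u
  have hsplit : prodFrom r p (n + 1 - p) = r n * prodFrom r p (n - p) := by
    rw [show n + 1 - p = (n - p) + 1 by omega]
    show r (p + (n - p)) * prodFrom r p (n - p) = _
    rw [show p + (n - p) = n by omega]
  refine ⟨k + 1, by omega, ?_⟩
  have key : seqProd r n (k + 1) = seqProd r n (k + 1) * r n *
      (prodFrom r p (n - p) * unop a) := by
    rw [seqProd_eq_prodFrom]
    calc prodFrom r (n + 1) (k + 1)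
        = prodFrom r (n + 1) (k + 1) * u := hPk1
      _ = _ := by rw [hu, hsplit]; noncomm_ring
  ext y
  constructor
  · rintro ⟨s, rfl⟩
    exact ⟨(prodFrom r p (n - p) * unop a) * s, by nth_rewrite 1 [key]; noncomm_ring⟩
  · rintro ⟨s, rfl⟩
    exact ⟨r n * s, by noncomm_ring⟩
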